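/- Let f : ℝ^n → ℝ ∪ {+∞} be a lower semicontinuous function and ȳ ∈ J(f). Then the limiting subdifferential of f at (∞, ȳ) satisfies: ∂f(∞, ȳ) equals the set of all u ∈ ℝ^n for which there exist sequences x_k with ‖x_k‖ → ∞ and f(x_k) → ȳ, and u_k ∈ ∂f(x_k) with u_k → u. -/

import Mathlib

open Filter Topology Set Metric Pointwise
open scoped RealInnerProductSpace ENNReal

noncomputable section

variable {E F G : Type*}
  [NormedAddCommGroup E] [InnerProductSpace ℝ E]
  [NormedAddCommGroup F] [InnerProductSpace ℝ F]
  [NormedAddCommGroup G] [InnerProductSpace ℝ G]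

/-- The regular (Fréchet) normal cone to a subset of a product of inner product
spaces, at a point `p` (empty if `p ∉ Ω`). -/
def frechetNormalCone2 (Ω : Set (E × F)) (p : E × F) : Set (E × F) :=
  {ξ | p ∈ Ω ∧ ∀ ε > (0:ℝ), ∀ᶠ q in nhdsWithin p Ω,
      ⟪ξ.1, q.1 - p.1⟫ + ⟪ξ.2, q.2 - p.2⟫ ≤ ε * ‖q - p‖}

/-- The limiting (Mordukhovich) normal cone. -/
def limitingNormalCone2 (Ω : Set (E × F)) (p : E × F) : Set (E × F) :=
  {ξ | ∃ pk : ℕ → E × F, ∃ ξk : ℕ → E × F,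
    (∀ k, pk k ∈ Ω) ∧ Tendsto pk atTop (𝓝 p) ∧
    (∀ k, ξk k ∈ frechetNormalCone2 Ω (pk k)) ∧ Tendsto ξk atTop (𝓝 ξ)}

/-- The normal cone to `Ω ⊆ E × F` at `(∞, ȳ)`. -/
def normalConeAtInfty (Ω : Set (E × F)) (ybar : F) : Set (E × F) :=
  {ξ | ∃ pk : ℕ → E × F, ∃ ξk : ℕ → E × F,
    (∀ k, pk k ∈ Ω) ∧ Tendsto (fun k => ‖(pk k).1‖) atTop atTop ∧
    Tendsto (fun k => (pk k).2) atTop (𝓝 ybar) ∧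
    (∀ k, ξk k ∈ frechetNormalCone2 Ω (pk k)) ∧ Tendsto ξk atTop (𝓝 ξ)}

/-- `Ω ⊆ E × F` is locally closed at `(∞, ȳ)`. -/
def LocallyClosedAtInfty (Ω : Set (E × F)) (ybar : F) : Prop :=
  ∃ R > (0:ℝ), ∃ V ∈ 𝓝 ybar, IsClosed V ∧
    IsClosed (Ω ∩ {p : E × F | R ≤ ‖p.1‖ ∧ p.2 ∈ V})

/-- Graph of a set-valued mapping. -/
def svGraph (S : E → Set F) : Set (E × F) := {p | p.2 ∈ S p.1}

/-- Jelonek set of a set-valued mapping. -/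
def jelonek (S : E → Set F) : Set F :=
  {y | ∃ xk : ℕ → E, ∃ yk : ℕ → F,
    Tendsto (fun k => ‖xk k‖) atTop atTop ∧ (∀ k, yk k ∈ S (xk k)) ∧
    Tendsto yk atTop (𝓝 y)}

/-- Coderivative of a set-valued mapping at a point of its graph. -/
def coderiv (S : E → Set F) (x : E) (y : F) (v : F) : Set E :=
  {u | (u, -v) ∈ limitingNormalCone2 (svGraph S) (x, y)}

/-- Coderivative of a set-valued mapping at `(∞, ȳ)`. -/
def coderivAtInfty (S : E → Set F) (ybar : F) (v : F) : Set E :=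
  {u | (u, -v) ∈ normalConeAtInfty (svGraph S) ybar}

/-- Regular normal cone, one-space version. -/
def frechetNormalCone1 (Ω : Set E) (x : E) : Set E :=
  {ξ | x ∈ Ω ∧ ∀ ε > (0:ℝ), ∀ᶠ x' in nhdsWithin x Ω, ⟪ξ, x' - x⟫ ≤ ε * ‖x' - x‖}

/-- Normal cone at infinity to an unbounded subset of `E`. -/
def normalConeAtInfty1 (Ω : Set E) : Set E :=
  {ξ | ∃ xk : ℕ → E, ∃ ξk : ℕ → E, (∀ k, xk k ∈ Ω) ∧
    Tendsto (fun k => ‖xk k‖) atTop atTop ∧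
    (∀ k, ξk k ∈ frechetNormalCone1 Ω (xk k)) ∧ Tendsto ξk atTop (𝓝 ξ)}

/-- Epigraph of an extended-real-valued function. -/
def epiSet (f : E → EReal) : Set (E × ℝ) := {p | f p.1 ≤ (p.2 : EReal)}

/-- Graph of an extended-real-valued function, as a subset of `E × ℝ`. -/
def gphFun (f : E → EReal) : Set (E × ℝ) := {p | f p.1 = (p.2 : EReal)}

/-- Jelonek set of a function. -/
def jelonekFun (f : E → EReal) : Set ℝ :=
  {y | ∃ xk : ℕ → E, Tendsto (fun k => ‖xk k‖) atTop atTop ∧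
    Tendsto (fun k => f (xk k)) atTop (𝓝 (y : EReal))}

/-- Limiting subdifferential of `f` at `x` (empty outside `dom f`). -/
def limSubdiff (f : E → EReal) (x : E) : Set E :=
  {u | ∃ r : ℝ, f x = (r : EReal) ∧
    (u, (-1 : ℝ)) ∈ limitingNormalCone2 (epiSet f) (x, r)}

/-- Limiting subdifferential of `f` at `(∞, ȳ)`. -/
def limSubdiffAtInfty (f : E → EReal) (ybar : ℝ) : Set E :=
  {u | (u, (-1 : ℝ)) ∈ normalConeAtInfty (epiSet f) ybar}

/-- Singular subdifferential of `f` at `(∞, ȳ)`. -/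
def singSubdiffAtInfty (f : E → EReal) (ybar : ℝ) : Set E :=
  {u | (u, (0 : ℝ)) ∈ normalConeAtInfty (epiSet f) ybar}

/-- Inverse of a set-valued mapping. -/
def svInv (S : E → Set F) (y : F) : Set E := {x | y ∈ S x}

/-- Preimage `F⁻¹(V) = {x : F(x) ∩ V ≠ ∅}`. -/
def svPreimage (S : E → Set F) (V : Set F) : Set E := {x | (S x ∩ V).Nonempty}

/-- Distance function of a set-valued mapping, with value `+∞` on empty values. -/
def dSV (S : E → Set F) (p : E × F) : EReal :=
  ((EMetric.infEdist p.2 (S p.1) : ℝ≥0∞) : EReal)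

/-- Regular normal cone on `(E × F) × ℝ`. -/
def frechetNormalCone3 (Ω : Set ((E × F) × ℝ)) (p : (E × F) × ℝ) : Set ((E × F) × ℝ) :=
  {ξ | p ∈ Ω ∧ ∀ ε > (0:ℝ), ∀ᶠ q in nhdsWithin p Ω,
      ⟪ξ.1.1, q.1.1 - p.1.1⟫ + ⟪ξ.1.2, q.1.2 - p.1.2⟫ + ξ.2 * (q.2 - p.2)
        ≤ ε * ‖q - p‖}

/-- Limiting normal cone on `(E × F) × ℝ`. -/
def limitingNormalCone3 (Ω : Set ((E × F) × ℝ)) (p : (E × F) × ℝ) : Set ((E × F) × ℝ) :=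
  {ξ | ∃ pk ξk : ℕ → (E × F) × ℝ, (∀ k, pk k ∈ Ω) ∧ Tendsto pk atTop (𝓝 p) ∧
    (∀ k, ξk k ∈ frechetNormalCone3 Ω (pk k)) ∧ Tendsto ξk atTop (𝓝 ξ)}

/-- Limiting subdifferential of the distance function `d_F`. -/
def limSubdiffD (S : E → Set F) (p : E × F) : Set (E × F) :=
  {w | ∃ r : ℝ, dSV S p = (r : EReal) ∧
    (w, (-1 : ℝ)) ∈ limitingNormalCone3 {q : (E × F) × ℝ | dSV S q.1 ≤ (q.2 : EReal)} (p, r)}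

/-- The set `J⁺(F₁ + F₂, y)`. -/
def jplus (S₁ S₂ : E → Set F) (y : F) : Set (F × F) :=
  {q | ∃ xk : ℕ → E, ∃ y1k y2k : ℕ → F,
    Tendsto (fun k => ‖xk k‖) atTop atTop ∧
    (∀ k, y1k k ∈ S₁ (xk k)) ∧ (∀ k, y2k k ∈ S₂ (xk k)) ∧
    Tendsto y1k atTop (𝓝 q.1) ∧ Tendsto y2k atTop (𝓝 q.2) ∧ q.1 + q.2 = y}

/-- The set `J°(F₂ ∘ F₁, y)`. -/
def jcirc (S₁ : E → Set G) (S₂ : G → Set F) (y : F) : Set G :=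
  {z | ∃ xk : ℕ → E, ∃ zk : ℕ → G, ∃ yk : ℕ → F,
    Tendsto (fun k => ‖xk k‖) atTop atTop ∧ (∀ k, zk k ∈ S₁ (xk k)) ∧
    (∀ k, yk k ∈ S₂ (zk k)) ∧ Tendsto zk atTop (𝓝 z) ∧ Tendsto yk atTop (𝓝 y)}

/-- Composition `F₂ ∘ F₁` of set-valued mappings. -/
def svComp (S₂ : G → Set F) (S₁ : E → Set G) (x : E) : Set F :=
  {y | ∃ z ∈ S₁ x, y ∈ S₂ z}

abbrev Eucl (n : ℕ) := EuclideanSpace ℝ (Fin n)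

section Helpers

lemma frechet_smul {Ω : Set (E × F)} {p ξ : E × F} (h : ξ ∈ frechetNormalCone2 Ω p)
    {c : ℝ} (hc : 0 < c) : c • ξ ∈ frechetNormalCone2 Ω p := by
  refine ⟨h.1, fun ε hε => ?_⟩
  filter_upwards [h.2 (ε / c) (by positivity)] with q hq
  have heq : ⟪(c • ξ).1, q.1 - p.1⟫ + ⟪(c • ξ).2, q.2 - p.2⟫
      = c * (⟪ξ.1, q.1 - p.1⟫ + ⟪ξ.2, q.2 - p.2⟫) := by
    simp [real_inner_smul_left, mul_add]
  rw [heq]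
  have := mul_le_mul_of_nonneg_left hq hc.le
  calc c * (⟪ξ.1, q.1 - p.1⟫ + ⟪ξ.2, q.2 - p.2⟫) ≤ c * (ε / c * ‖q - p‖) := this
    _ = ε * ‖q - p‖ := by field_simp

lemma frechet_mem_limiting {Ω : Set (E × F)} {p ξ : E × F}
    (h : ξ ∈ frechetNormalCone2 Ω p) : ξ ∈ limitingNormalCone2 Ω p :=
  ⟨fun _ => p, fun _ => ξ, fun _ => h.1, tendsto_const_nhds, fun _ => h, tendsto_const_nhds⟩

lemma frechet_epi_neg {f : E → EReal} {p : E × ℝ} {ξ : E × ℝ}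
    (h : ξ ∈ frechetNormalCone2 (epiSet f) p) (hneg : ξ.2 < 0) :
    f p.1 = (p.2 : EReal) := by
  have hmem : f p.1 ≤ (p.2 : EReal) := h.1
  by_contra hne
  have hlt : f p.1 < (p.2 : EReal) := lt_of_le_of_ne hmem hne
  obtain ⟨c, hc1, hc2⟩ := exists_between hlt
  have hcbot : c ≠ ⊥ := (bot_le.trans_lt hc1).ne'
  have hctop : c ≠ ⊤ := hc2.trans_le le_top |>.ne
  set r' : ℝ := c.toReal with hr'
  have hcr : c = (r' : EReal) := (EReal.coe_toReal hctop hcbot).symm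
  have hr'lt : r' < p.2 := by
    rw [hcr] at hc2; exact_mod_cast hc2
  set t0 : ℝ := p.2 - r' with ht0
  have ht0pos : 0 < t0 := by simp [ht0]; linarith
  set qs : ℕ → E × ℝ := fun j => (p.1, p.2 - t0 / (j + 1)) with hqs
  have hqmem : ∀ j, qs j ∈ epiSet f := by
    intro j
    have h1 : t0 / ((j:ℝ) + 1) ≤ t0 := by
      rw [div_le_iff₀ (by positivity)]
      nlinarith [ht0pos.le, (Nat.cast_nonneg j : (0:ℝ) ≤ j)]
    have h2 : r' ≤ p.2 - t0 / (j + 1) := by simp [ht0] at h1 ⊢; linarith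
    have : f p.1 ≤ ((p.2 - t0 / (j + 1) : ℝ) : EReal) := by
      refine le_trans (le_of_lt ?_) (EReal.coe_le_coe_iff.2 h2)
      rw [← hcr]; exact hc1
    exact this
  have hqtend : Tendsto qs atTop (𝓝[epiSet f] p) := by
    rw [tendsto_nhdsWithin_iff]
    constructor
    · have h0 : Tendsto (fun j : ℕ => t0 / (j + 1)) atTop (𝓝 0) :=
        tendsto_const_nhds.div_atTop (tendsto_atTop_add_const_right _ _ tendsto_natCast_atTop_atTop)
      have h2 : Tendsto (fun j : ℕ => p.2 - t0 / (j + 1)) atTop (𝓝 p.2) := by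
        simpa using tendsto_const_nhds.sub h0
      have := (tendsto_const_nhds : Tendsto (fun _ : ℕ => p.1) atTop (𝓝 p.1)).prodMk_nhds h2
      simpa [hqs] using this
    · exact Eventually.of_forall hqmem
  have hev := hqtend.eventually (h.2 (-ξ.2 / 2) (by linarith))
  obtain ⟨j, hj⟩ := hev.exists
  have hnorm : ‖qs j - p‖ = t0 / (j + 1) := by
    have : qs j - p = (0, -(t0 / (j + 1))) := by simp [hqs, Prod.ext_iff]
    have hpos' : (0:ℝ) < t0 / ((j:ℝ)+1) := by positivity
    rw [this, Prod.norm_def]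
    rw [norm_zero, Real.norm_eq_abs, abs_neg, abs_of_pos hpos']
    exact max_eq_right hpos'.le
  have hinner : ⟪ξ.1, (qs j).1 - p.1⟫ + ⟪ξ.2, (qs j).2 - p.2⟫ = ξ.2 * (-(t0 / (j + 1))) := by
    simp only [hqs]
    simp [RCLike.inner_apply]
    ring
  rw [hinner, hnorm] at hj
  have hpos : (0:ℝ) < t0 / (j + 1) := by positivity
  nlinarith

end Helpers

theorem stmt6 {n : ℕ} (f : Eucl n → EReal)
    (hlsc : LowerSemicontinuous f) (hbot : ∀ x, f x ≠ ⊥)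
    (ybar : ℝ) (hJ : ybar ∈ jelonekFun f) :
    limSubdiffAtInfty f ybar =
      {u | ∃ xk : ℕ → Eucl n, ∃ uk : ℕ → Eucl n,
        Tendsto (fun k => ‖xk k‖) atTop atTop ∧
        Tendsto (fun k => f (xk k)) atTop (𝓝 (ybar : EReal)) ∧
        (∀ k, uk k ∈ limSubdiff f (xk k)) ∧ Tendsto uk atTop (𝓝 u)} := by
  ext u
  constructor
  · rintro ⟨pk, ξk, hΩ, hnorm, h2, hfre, hξ⟩
    have hsnd : Tendsto (fun k => (ξk k).2) atTop (𝓝 (-1 : ℝ)) :=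
      (continuous_snd.tendsto _).comp hξ
    have hfst : Tendsto (fun k => (ξk k).1) atTop (𝓝 u) :=
      (continuous_fst.tendsto _).comp hξ
    obtain ⟨N, hN⟩ := eventually_atTop.1 (hsnd.eventually_lt_const (by norm_num : (-1:ℝ) < 0))
    have hneg : ∀ k : ℕ, (ξk (k + N)).2 < 0 := fun k => hN _ (Nat.le_add_left N k)
    have heq : ∀ k : ℕ, f ((pk (k + N)).1) = (((pk (k + N)).2 : ℝ) : EReal) :=
      fun k => frechet_epi_neg (hfre (k + N)) (hneg k)
    refine ⟨fun k => (pk (k + N)).1, fun k => (-(ξk (k + N)).2)⁻¹ • (ξk (k + N)).1,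
      hnorm.comp (tendsto_add_atTop_nat N), ?_, ?_, ?_⟩
    · have hr : Tendsto (fun k => (pk (k + N)).2) atTop (𝓝 ybar) :=
        h2.comp (tendsto_add_atTop_nat N)
      have := EReal.tendsto_coe.2 hr
      exact this.congr (fun k => (heq k).symm)
    · intro k
      refine ⟨(pk (k + N)).2, heq k, ?_⟩
      have hc : 0 < (-(ξk (k + N)).2)⁻¹ := by
        have := hneg k
        have h2 : 0 < -(ξk (k + N)).2 := by linarith
        exact inv_pos.2 h2
      have hsc := frechet_smul (hfre (k + N)) hc
      have hsceq : (-(ξk (k + N)).2)⁻¹ • ξk (k + N)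
          = ((-(ξk (k + N)).2)⁻¹ • (ξk (k + N)).1, (-1 : ℝ)) := by
        have hne : (ξk (k + N)).2 ≠ 0 := (hneg k).ne
        ext
        · rfl
        · show (-(ξk (k + N)).2)⁻¹ * (ξk (k + N)).2 = -1
          field_simp
      rw [hsceq] at hsc
      exact frechet_mem_limiting hsc
    · have hcN : Tendsto (fun k => (-(ξk (k + N)).2)⁻¹) atTop (𝓝 1) := by
        have h1 := (hsnd.comp (tendsto_add_atTop_nat N)).neg
        have := h1.inv₀ (by norm_num : -(-1 : ℝ) ≠ 0)
        simpa using this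
      have := hcN.smul (hfst.comp (tendsto_add_atTop_nat N))
      simpa using this
  · rintro ⟨xk, uk, hxn, hfx, hmem, hut⟩
    choose rk hrk hlim using hmem
    choose pks ξks hΩ htp hfre htξ using hlim
    have hsel : ∀ k : ℕ, ∃ j, dist (pks k j) (xk k, rk k) < 1/(k+1) ∧
        dist (ξks k j) (uk k, -1) < 1/(k+1) := by
      intro k
      have hp : (0:ℝ) < 1/(k+1) := by positivity
      obtain ⟨N1, hN1⟩ := Metric.tendsto_atTop.1 (htp k) _ hp
      obtain ⟨N2, hN2⟩ := Metric.tendsto_atTop.1 (htξ k) _ hp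
      exact ⟨max N1 N2, hN1 _ (le_max_left _ _), hN2 _ (le_max_right _ _)⟩
    choose jk hj1 hj2 using hsel
    set qk : ℕ → Eucl n × ℝ := fun k => pks k (jk k) with hqk
    set ηk : ℕ → Eucl n × ℝ := fun k => ξks k (jk k) with hηk
    have hone : Tendsto (fun k : ℕ => 1/((k:ℝ)+1)) atTop (𝓝 0) :=
      tendsto_one_div_add_atTop_nhds_zero_nat
    have hrt : Tendsto rk atTop (𝓝 ybar) := by
      have : Tendsto (fun k => ((rk k : ℝ) : EReal)) atTop (𝓝 (ybar : EReal)) :=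
        hfx.congr (fun k => hrk k)
      exact EReal.tendsto_coe.1 this
    refine ⟨qk, ηk, fun k => hΩ k (jk k), ?_, ?_, fun k => hfre k (jk k), ?_⟩
    · refine tendsto_atTop_mono ?_ (tendsto_atTop_add_const_right _ (-1) hxn)
      intro k
      have hd : dist ((qk k).1) (xk k) < 1/(k+1) := by
        calc dist ((qk k).1) (xk k) ≤ dist (qk k) (xk k, rk k) := by
              rw [Prod.dist_eq]; exact le_max_left _ _
          _ < 1/(k+1) := hj1 k
      have hle : (1:ℝ)/(k+1) ≤ 1 := by
        rw [div_le_one (by positivity)]; linarith [(Nat.cast_nonneg k : (0:ℝ) ≤ k)]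
      have := abs_norm_sub_norm_le ((qk k).1) (xk k)
      rw [← dist_eq_norm] at this
      have h1 := (abs_le.1 this).1
      linarith
    · rw [tendsto_iff_dist_tendsto_zero]
      have hb : ∀ k : ℕ, dist ((qk k).2) ybar ≤ 1/(k+1) + dist (rk k) ybar := by
        intro k
        calc dist ((qk k).2) ybar ≤ dist ((qk k).2) (rk k) + dist (rk k) ybar :=
              dist_triangle _ _ _
          _ ≤ 1/(k+1) + dist (rk k) ybar := by
              have h' : dist ((qk k).2) (rk k) ≤ dist (qk k) (xk k, rk k) := by
                rw [Prod.dist_eq]; exact le_max_right _ _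
              linarith [(hj1 k).le.trans' h']
      have hg : Tendsto (fun k : ℕ => 1/((k:ℝ)+1) + dist (rk k) ybar) atTop (𝓝 0) := by
        have := tendsto_iff_dist_tendsto_zero.1 hrt
        simpa using hone.add this
      exact squeeze_zero (fun k => dist_nonneg) hb hg
    · have hul : Tendsto (fun k => (uk k, (-1:ℝ))) atTop (𝓝 (u, (-1:ℝ))) :=
        hut.prodMk_nhds tendsto_const_nhds
      rw [tendsto_iff_dist_tendsto_zero]
      have hb : ∀ k : ℕ, dist (ηk k) (u, (-1:ℝ)) ≤ 1/(k+1) + dist (uk k, (-1:ℝ)) (u, (-1:ℝ)) := by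
        intro k
        calc dist (ηk k) (u, (-1:ℝ))
            ≤ dist (ηk k) (uk k, (-1:ℝ)) + dist (uk k, (-1:ℝ)) (u, (-1:ℝ)) := dist_triangle _ _ _
          _ ≤ 1/(k+1) + dist (uk k, (-1:ℝ)) (u, (-1:ℝ)) := by linarith [hj2 k]
      have hg : Tendsto (fun k : ℕ => 1/((k:ℝ)+1) + dist (uk k, (-1:ℝ)) (u, (-1:ℝ))) atTop (𝓝 0) := by
        have := tendsto_iff_dist_tendsto_zero.1 hul
        simpa using hone.add this
      exact squeeze_zero (fun k => dist_nonneg) hb hg
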